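/- (Lemma 3.) Let p, q, r be integers with p, q, r ≥ 3 that are relatively prime in pairs, let m be an integer with m < pqr, and set I₁ = (m−q−p, m−q] ∩ ℤ and I₂ = (m−p, m] ∩ ℤ. If there is no n ∈ I₁ ∪ I₂ such that r divides n and (χ(n) = 1 or χ(n−r) = 1), then a_m = a_{m−pq}, where a_m denotes the m-th coefficient of Q_{p,q,r} (interpreted as 0 for m < 0 or m > (p−1)(q−1)(r−1)) and χ = χ_{p,q,r}. -/

import Mathlib

open Polynomial Classical

/-- Denominator `(X^{pq}-1)(X^{qr}-1)(X^{rp}-1)(X-1)` of the ternary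
inclusion-exclusion polynomial. -/
noncomputable def incexcD (p q r : ℕ) : Polynomial ℤ :=
  (X ^ (p * q) - 1) * (X ^ (q * r) - 1) * (X ^ (r * p) - 1) * (X - 1)

/-- Numerator `(X^{pqr}-1)(X^p-1)(X^q-1)(X^r-1)` of the ternary
inclusion-exclusion polynomial. -/
noncomputable def incexcN (p q r : ℕ) : Polynomial ℤ :=
  (X ^ (p * q * r) - 1) * (X ^ p - 1) * (X ^ q - 1) * (X ^ r - 1)

/-- The coefficient of a polynomial at an integer index, interpreted as `0`
for negative indices (and automatically `0` beyond the degree). -/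
noncomputable def coeffZ (Q : Polynomial ℤ) (m : ℤ) : ℤ :=
  if 0 ≤ m then Q.coeff m.toNat else 0

/-- `chi p q r n = 1` if `n` is `{p,q,r}`-representable, i.e. if in the unique
representation `n = x·qr + y·rp + z·pq + δ·pqr` with `0 ≤ x < p`, `0 ≤ y < q`,
`0 ≤ z < r`, the integer `δ` is nonnegative; `chi p q r n = 0` otherwise. -/
noncomputable def chi (p q r : ℕ) (n : ℤ) : ℤ :=
  if ∃ x y z δ : ℤ, 0 ≤ x ∧ x < p ∧ 0 ≤ y ∧ y < q ∧ 0 ≤ z ∧ z < r ∧ 0 ≤ δ ∧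
      n = x * q * r + y * r * p + z * p * q + δ * p * q * r
  then 1 else 0

noncomputable def psiF (p q r : ℕ) (n : ℤ) : ℤ :=
  if ∃ x y : ℤ, 0 ≤ x ∧ x < p ∧ 0 ≤ y ∧ y < q ∧ n = x * q * r + y * r * p then 1 else 0

noncomputable def alphaF (p q r : ℕ) (n : ℤ) : ℤ :=
  if ∃ y : ℤ, 0 ≤ y ∧ y < q ∧ n = y * r * p then 1 else 0

noncomputable def betaF (p q r : ℕ) (n : ℤ) : ℤ :=
  if ∃ y : ℤ, 0 ≤ y ∧ y < q ∧ n = y * r * p + p * q * r then 1 else 0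

lemma chi_one {p q r : ℕ} {n : ℤ}
    (h : ∃ x y z δ : ℤ, 0 ≤ x ∧ x < p ∧ 0 ≤ y ∧ y < q ∧ 0 ≤ z ∧ z < r ∧ 0 ≤ δ ∧
      n = x * q * r + y * r * p + z * p * q + δ * p * q * r) : chi p q r n = 1 := if_pos h

lemma chi_zero {p q r : ℕ} {n : ℤ}
    (h : ¬ ∃ x y z δ : ℤ, 0 ≤ x ∧ x < p ∧ 0 ≤ y ∧ y < q ∧ 0 ≤ z ∧ z < r ∧ 0 ≤ δ ∧
      n = x * q * r + y * r * p + z * p * q + δ * p * q * r) : chi p q r n = 0 := if_neg h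

lemma psiF_one {p q r : ℕ} {n : ℤ}
    (h : ∃ x y : ℤ, 0 ≤ x ∧ x < p ∧ 0 ≤ y ∧ y < q ∧ n = x * q * r + y * r * p) :
    psiF p q r n = 1 := if_pos h

lemma psiF_zero {p q r : ℕ} {n : ℤ}
    (h : ¬ ∃ x y : ℤ, 0 ≤ x ∧ x < p ∧ 0 ≤ y ∧ y < q ∧ n = x * q * r + y * r * p) :
    psiF p q r n = 0 := if_neg h

lemma alphaF_one {p q r : ℕ} {n : ℤ} (h : ∃ y : ℤ, 0 ≤ y ∧ y < q ∧ n = y * r * p) :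
    alphaF p q r n = 1 := if_pos h

lemma alphaF_zero {p q r : ℕ} {n : ℤ} (h : ¬ ∃ y : ℤ, 0 ≤ y ∧ y < q ∧ n = y * r * p) :
    alphaF p q r n = 0 := if_neg h

lemma betaF_one {p q r : ℕ} {n : ℤ}
    (h : ∃ y : ℤ, 0 ≤ y ∧ y < q ∧ n = y * r * p + p * q * r) :
    betaF p q r n = 1 := if_pos h

lemma betaF_zero {p q r : ℕ} {n : ℤ}
    (h : ¬ ∃ y : ℤ, 0 ≤ y ∧ y < q ∧ n = y * r * p + p * q * r) :
    betaF p q r n = 0 := if_neg h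

lemma rep_unique {p q r : ℕ} (hp : 0 < p) (hq : 0 < q) (hr : 0 < r)
    (hpq : Nat.Coprime p q) (hqr : Nat.Coprime q r) (hrp : Nat.Coprime r p)
    {x y z δ x' y' z' δ' : ℤ}
    (hx : 0 ≤ x) (hx' : x < p) (hy : 0 ≤ y) (hy' : y < q) (hz : 0 ≤ z) (hz' : z < r)
    (hx2 : 0 ≤ x') (hx2' : x' < p) (hy2 : 0 ≤ y') (hy2' : y' < q) (hz2 : 0 ≤ z') (hz2' : z' < r)
    (h : x * q * r + y * r * p + z * p * q + δ * p * q * r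
       = x' * q * r + y' * r * p + z' * p * q + δ' * p * q * r) :
    x = x' ∧ y = y' ∧ z = z' ∧ δ = δ' := by
  have cp : IsCoprime (p : ℤ) ((q : ℤ) * r) := by
    have : Nat.Coprime p (q * r) := Nat.Coprime.mul_right hpq hrp.symm
    exact_mod_cast Nat.isCoprime_iff_coprime.mpr this
  have cq : IsCoprime (q : ℤ) ((r : ℤ) * p) := by
    have : Nat.Coprime q (r * p) := Nat.Coprime.mul_right hqr hpq.symm
    exact_mod_cast Nat.isCoprime_iff_coprime.mpr this
  have cr : IsCoprime (r : ℤ) ((p : ℤ) * q) := by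
    have : Nat.Coprime r (p * q) := Nat.Coprime.mul_right hrp hqr.symm
    exact_mod_cast Nat.isCoprime_iff_coprime.mpr this
  have hxx : x = x' := by
    have hdvd : (p : ℤ) ∣ (x - x') * ((q : ℤ) * r) :=
      ⟨(y' - y) * r + (z' - z) * q + (δ' - δ) * (q * r), by linear_combination h⟩
    have := Int.eq_zero_of_abs_lt_dvd (cp.dvd_of_dvd_mul_right hdvd)
      (abs_lt.mpr ⟨by linarith, by linarith⟩)
    linarith
  have hyy : y = y' := by
    have hdvd : (q : ℤ) ∣ (y - y') * ((r : ℤ) * p) :=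
      ⟨(x' - x) * r + (z' - z) * p + (δ' - δ) * (p * r), by linear_combination h⟩
    have := Int.eq_zero_of_abs_lt_dvd (cq.dvd_of_dvd_mul_right hdvd)
      (abs_lt.mpr ⟨by linarith, by linarith⟩)
    linarith
  have hzz : z = z' := by
    have hdvd : (r : ℤ) ∣ (z - z') * ((p : ℤ) * q) :=
      ⟨(x' - x) * q + (y' - y) * p + (δ' - δ) * (p * q), by linear_combination h⟩
    have := Int.eq_zero_of_abs_lt_dvd (cr.dvd_of_dvd_mul_right hdvd)
      (abs_lt.mpr ⟨by linarith, by linarith⟩)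
    linarith
  refine ⟨hxx, hyy, hzz, ?_⟩
  have hne : ((p : ℤ) * q * r) ≠ 0 := by positivity
  have : δ * ((p:ℤ) * q * r) = δ' * ((p:ℤ) * q * r) := by
    subst hxx hyy hzz; linear_combination h
  exact mul_right_cancel₀ hne this

lemma chi_sub_pq {p q r : ℕ} (hp : 0 < p) (hq : 0 < q) (hr : 0 < r)
    (hpq : Nat.Coprime p q) (hqr : Nat.Coprime q r) (hrp : Nat.Coprime r p) (n : ℤ) :
    chi p q r n - chi p q r (n - p * q) = psiF p q r n := by
  have hp' : (0:ℤ) < p := by exact_mod_cast hp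
  have hq' : (0:ℤ) < q := by exact_mod_cast hq
  have hr' : (0:ℤ) < r := by exact_mod_cast hr
  by_cases hc : ∃ x y z δ : ℤ, 0 ≤ x ∧ x < p ∧ 0 ≤ y ∧ y < q ∧ 0 ≤ z ∧ z < r ∧ 0 ≤ δ ∧
      n = x * q * r + y * r * p + z * p * q + δ * p * q * r
  · obtain ⟨x, y, z, δ, hx0, hxp, hy0, hyq, hz0, hzr, hδ0, hn⟩ := hc
    rw [chi_one ⟨x, y, z, δ, hx0, hxp, hy0, hyq, hz0, hzr, hδ0, hn⟩]
    by_cases hz : z = 0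
    · by_cases hδ : δ = 0
      · rw [psiF_one ⟨x, y, hx0, hxp, hy0, hyq, by rw [hz, hδ] at hn; linarith⟩,
          chi_zero (by
            rintro ⟨x', y', z', δ', hx0', hxp', hy0', hyq', hz0', hzr', hδ0', hn'⟩
            by_cases hz' : z' = r - 1
            · obtain ⟨-, -, -, h4⟩ := rep_unique hp hq hr hpq hqr hrp
                hx0 hxp hy0 hyq hz0 hzr hx0' hxp'  hy0' hyq' (le_refl 0) hr'
                (show (x:ℤ) * q * r + y * r * p + z * p * q + δ * p * q * r
                  = x' * q * r + y' * r * p + 0 * p * q + (δ' + 1) * p * q * r by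
                  linear_combination hn' - hn + ((p:ℤ)*q) * hz')
              omega
            · have hzr2 : z' + 1 < r := by omega
              obtain ⟨-, -, h3, -⟩ := rep_unique hp hq hr hpq hqr hrp
                hx0 hxp hy0 hyq hz0 hzr hx0' hxp' hy0' hyq' (by linarith) hzr2
                (show (x:ℤ) * q * r + y * r * p + z * p * q + δ * p * q * r
                  = x' * q * r + y' * r * p + (z' + 1) * p * q + δ' * p * q * r by
                  linear_combination hn' - hn)
              omega)]
        norm_num
      · have hδ1 : 1 ≤ δ := by omega
        rw [chi_one ⟨x, y, (r:ℤ) - 1, δ - 1, hx0, hxp, hy0, hyq, by linarith, by linarith,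
            by linarith, by linear_combination hn + ((p:ℤ)*q) * hz⟩,
          psiF_zero (by
            rintro ⟨x', y', hx0', hxp', hy0', hyq', hn'⟩
            obtain ⟨-, -, -, h4⟩ := rep_unique hp hq hr hpq hqr hrp
              hx0 hxp hy0 hyq hz0 hzr hx0' hxp' hy0' hyq' (le_refl 0) hr'
              (show (x:ℤ) * q * r + y * r * p + z * p * q + δ * p * q * r
                = x' * q * r + y' * r * p + 0 * p * q + 0 * p * q * r by
                linear_combination hn' - hn)
            omega)]
        ring
    · have hz1 : 1 ≤ z := by omega
      rw [chi_one ⟨x, y, z - 1, δ, hx0, hxp, hy0, hyq, by linarith, by linarith, hδ0,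
          by linear_combination hn⟩,
        psiF_zero (by
          rintro ⟨x', y', hx0', hxp', hy0', hyq', hn'⟩
          obtain ⟨-, -, h3, -⟩ := rep_unique hp hq hr hpq hqr hrp
            hx0 hxp hy0 hyq hz0 hzr hx0' hxp' hy0' hyq' (le_refl 0) hr'
            (show (x:ℤ) * q * r + y * r * p + z * p * q + δ * p * q * r
              = x' * q * r + y' * r * p + 0 * p * q + 0 * p * q * r by
              linear_combination hn' - hn)
          omega)]
      ring
  · rw [chi_zero hc,
      chi_zero (by
        rintro ⟨x', y', z', δ', hx0', hxp', hy0', hyq', hz0', hzr', hδ0', hn'⟩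
        by_cases hz' : z' = r - 1
        · exact hc ⟨x', y', 0, δ' + 1, hx0', hxp', hy0', hyq', le_refl 0, hr',
            by linarith, by linear_combination hn' + ((p:ℤ)*q) * hz'⟩
        · exact hc ⟨x', y', z' + 1, δ', hx0', hxp', hy0', hyq', by linarith, by omega,
            hδ0', by linear_combination hn'⟩),
      psiF_zero (by
        rintro ⟨x', y', hx0', hxp', hy0', hyq', hn'⟩
        exact hc ⟨x', y', 0, 0, hx0', hxp', hy0', hyq', le_refl 0, hr', le_refl 0,
          by linear_combination hn'⟩)]
    norm_num

lemma psi_sub_qr {p q r : ℕ} (hp : 0 < p) (hq : 0 < q) (hr : 0 < r)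
    (hpq : Nat.Coprime p q) (hqr : Nat.Coprime q r) (hrp : Nat.Coprime r p) (n : ℤ) :
    psiF p q r n - psiF p q r (n - q * r) = alphaF p q r n - betaF p q r n := by
  have hp' : (0:ℤ) < p := by exact_mod_cast hp
  have hq' : (0:ℤ) < q := by exact_mod_cast hq
  have hr' : (0:ℤ) < r := by exact_mod_cast hr
  by_cases ha : ∃ x y : ℤ, 0 ≤ x ∧ x < p ∧ 0 ≤ y ∧ y < q ∧ n = x * q * r + y * r * p
  · obtain ⟨x, y, hx0, hxp, hy0, hyq, hn⟩ := ha
    rw [psiF_one ⟨x, y, hx0, hxp, hy0, hyq, hn⟩]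
    by_cases hx : x = 0
    · subst hx
      rw [alphaF_one ⟨y, hy0, hyq, by linear_combination hn⟩,
        betaF_zero (by
          rintro ⟨y', hy0', hyq', hn'⟩
          obtain ⟨-, -, -, h4⟩ := rep_unique hp hq hr hpq hqr hrp
            (le_refl (0:ℤ)) hp' hy0 hyq (le_refl (0:ℤ)) hr'
            (le_refl (0:ℤ)) hp' hy0' hyq' (le_refl (0:ℤ)) hr'
            (show (0:ℤ) * q * r + y * r * p + 0 * p * q + 0 * p * q * r
              = 0 * q * r + y' * r * p + 0 * p * q + 1 * p * q * r by
              linear_combination hn' - hn)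
          omega),
        psiF_zero (by
          rintro ⟨x', y', hx0', hxp', hy0', hyq', hn'⟩
          obtain ⟨-, -, -, h4⟩ := rep_unique hp hq hr hpq hqr hrp
            hx0' hxp' hy0' hyq' (le_refl (0:ℤ)) hr'
            (by linarith : (0:ℤ) ≤ (p:ℤ) - 1) (by linarith) hy0 hyq (le_refl (0:ℤ)) hr'
            (show (x':ℤ) * q * r + y' * r * p + 0 * p * q + 0 * p * q * r
              = ((p:ℤ) - 1) * q * r + y * r * p + 0 * p * q + (-1) * p * q * r by
              linear_combination hn - hn')
          omega)]
    · have hx1 : 1 ≤ x := by omega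
      rw [psiF_one ⟨x - 1, y, by linarith, by linarith, hy0, hyq, by linear_combination hn⟩,
        alphaF_zero (by
          rintro ⟨y', hy0', hyq', hn'⟩
          obtain ⟨h1, -, -, -⟩ := rep_unique hp hq hr hpq hqr hrp
            hx0 hxp hy0 hyq (le_refl (0:ℤ)) hr'
            (le_refl (0:ℤ)) hp' hy0' hyq' (le_refl (0:ℤ)) hr'
            (show (x:ℤ) * q * r + y * r * p + 0 * p * q + 0 * p * q * r
              = 0 * q * r + y' * r * p + 0 * p * q + 0 * p * q * r by
              linear_combination hn' - hn)
          omega),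
        betaF_zero (by
          rintro ⟨y', hy0', hyq', hn'⟩
          obtain ⟨h1, -, -, -⟩ := rep_unique hp hq hr hpq hqr hrp
            hx0 hxp hy0 hyq (le_refl (0:ℤ)) hr'
            (le_refl (0:ℤ)) hp' hy0' hyq' (le_refl (0:ℤ)) hr'
            (show (x:ℤ) * q * r + y * r * p + 0 * p * q + 0 * p * q * r
              = 0 * q * r + y' * r * p + 0 * p * q + 1 * p * q * r by
              linear_combination hn' - hn)
          omega)]
      norm_num
  · rw [psiF_zero ha]
    by_cases hb : ∃ x y : ℤ, 0 ≤ x ∧ x < p ∧ 0 ≤ y ∧ y < q ∧ n - q * r = x * q * r + y * r * p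
    · obtain ⟨x', y', hx0', hxp', hy0', hyq', hn'⟩ := hb
      by_cases hx' : x' = (p:ℤ) - 1
      · have hn2 : n = y' * r * p + p * q * r := by
          linear_combination hn' + ((q:ℤ) * r) * hx'
        rw [psiF_one ⟨x', y', hx0', hxp', hy0', hyq', hn'⟩,
          betaF_one ⟨y', hy0', hyq', hn2⟩,
          alphaF_zero (by
            rintro ⟨y'', hy0'', hyq'', hn''⟩
            obtain ⟨-, -, -, h4⟩ := rep_unique hp hq hr hpq hqr hrp
              (le_refl (0:ℤ)) hp' hy0'' hyq'' (le_refl (0:ℤ)) hr'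
              (le_refl (0:ℤ)) hp' hy0' hyq' (le_refl (0:ℤ)) hr'
              (show (0:ℤ) * q * r + y'' * r * p + 0 * p * q + 0 * p * q * r
                = 0 * q * r + y' * r * p + 0 * p * q + 1 * p * q * r by
                linear_combination hn2 - hn'')
            omega)]
      · exact absurd ⟨x' + 1, y', by linarith, by omega, hy0', hyq',
          by linear_combination hn'⟩ ha
    · rw [psiF_zero hb,
        alphaF_zero (fun ⟨y', hy0', hyq', hn'⟩ =>
          ha ⟨0, y', le_refl 0, hp', hy0', hyq', by linear_combination hn'⟩),
        betaF_zero (fun ⟨y', hy0', hyq', hn'⟩ =>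
          hb ⟨(p:ℤ) - 1, y', by linarith, by linarith, hy0', hyq', by linear_combination hn'⟩)]

lemma chi_neg {p q r : ℕ} {n : ℤ} (hn : n < 0) : chi p q r n = 0 := by
  rw [chi, if_neg]
  rintro ⟨x, y, z, δ, hx, _, hy, _, hz, _, hδ, hn'⟩
  have h1 : 0 ≤ x * q * r := by positivity
  have h2 : 0 ≤ y * r * p := by positivity
  have h3 : 0 ≤ z * p * q := by positivity
  have h4 : 0 ≤ δ * p * q * r := by positivity
  linarith

lemma psiF_neg {p q r : ℕ} {n : ℤ} (hn : n < 0) : psiF p q r n = 0 := by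
  rw [psiF, if_neg]
  rintro ⟨x, y, hx, _, hy, _, hn'⟩
  have h1 : 0 ≤ x * q * r := by positivity
  have h2 : 0 ≤ y * r * p := by positivity
  linarith

lemma alphaF_neg {p q r : ℕ} {n : ℤ} (hn : n < 0) : alphaF p q r n = 0 := by
  rw [alphaF, if_neg]
  rintro ⟨y, hy, _, hn'⟩
  have h2 : 0 ≤ y * r * p := by positivity
  linarith

lemma betaF_neg {p q r : ℕ} {n : ℤ} (hn : n < 0) : betaF p q r n = 0 := by
  rw [betaF, if_neg]
  rintro ⟨y, hy, _, hn'⟩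
  have h2 : 0 ≤ y * r * p := by positivity
  have h3 : (0:ℤ) ≤ p * q * r := by positivity
  linarith

lemma alpha_sub_rp {p q r : ℕ} (hp : 0 < p) (hq : 0 < q) (hr : 0 < r) (n : ℤ) :
    alphaF p q r n - alphaF p q r (n - r * p)
      = (if n = 0 then 1 else 0) - (if n = (p : ℤ) * q * r then 1 else 0) := by
  have hq' : (0:ℤ) < q := by exact_mod_cast hq
  have hrp : (0:ℤ) < (r:ℤ) * p := by positivity
  have hpqr : (0:ℤ) < (p:ℤ) * q * r := by positivity
  by_cases ha : ∃ y : ℤ, 0 ≤ y ∧ y < q ∧ n = y * r * p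
  · obtain ⟨y, hy0, hyq, hn⟩ := ha
    rw [alphaF_one ⟨y, hy0, hyq, hn⟩]
    by_cases hy : y = 0
    · subst hy
      have hn0 : n = 0 := by linarith
      rw [if_pos hn0, if_neg (by rw [hn0]; exact fun h => absurd h.symm (ne_of_gt hpqr)),
        alphaF_zero (by
          rintro ⟨y', hy0', _, hn'⟩
          have : 0 ≤ y' * r * p := by positivity
          nlinarith)]
    · have hy1 : 1 ≤ y := by omega
      rw [alphaF_one ⟨y - 1, by linarith, by linarith, by linear_combination hn⟩,
        if_neg (by nlinarith),
        if_neg (fun h => by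
          have h2 : y * ((r:ℤ) * p) = q * ((r:ℤ) * p) := by linear_combination hn.symm.trans h
          have := mul_right_cancel₀ (ne_of_gt hrp) h2
          omega)]
      ring
  · rw [alphaF_zero ha]
    by_cases hb : ∃ y : ℤ, 0 ≤ y ∧ y < q ∧ n - r * p = y * r * p
    · obtain ⟨y', hy0', hyq', hn'⟩ := hb
      by_cases hy' : y' = q - 1
      · have hn2 : n = (p:ℤ) * q * r := by subst hy'; linear_combination hn'
        rw [alphaF_one ⟨y', hy0', hyq', hn'⟩, if_pos hn2,
          if_neg (by rw [hn2]; exact ne_of_gt hpqr)]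
      · exact absurd ⟨y' + 1, by linarith, by omega, by linear_combination hn'⟩ ha
    · rw [alphaF_zero hb,
        if_neg (fun h => ha ⟨0, le_refl 0, hq', by linarith⟩),
        if_neg (fun h => hb ⟨q - 1, by linarith, by linarith, by linear_combination h⟩)]

lemma beta_sub_rp {p q r : ℕ} (hp : 0 < p) (hq : 0 < q) (hr : 0 < r) (n : ℤ) :
    betaF p q r n - betaF p q r (n - r * p)
      = (if n = (p : ℤ) * q * r then 1 else 0)
        - (if n = 2 * ((p : ℤ) * q * r) then 1 else 0) := by
  have hq' : (0:ℤ) < q := by exact_mod_cast hq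
  have hrp : (0:ℤ) < (r:ℤ) * p := by positivity
  have hpqr : (0:ℤ) < (p:ℤ) * q * r := by positivity
  by_cases ha : ∃ y : ℤ, 0 ≤ y ∧ y < q ∧ n = y * r * p + p * q * r
  · obtain ⟨y, hy0, hyq, hn⟩ := ha
    rw [betaF_one ⟨y, hy0, hyq, hn⟩]
    by_cases hy : y = 0
    · subst hy
      have hn0 : n = (p:ℤ) * q * r := by linarith
      rw [if_pos hn0, if_neg (by rw [hn0]; intro h; nlinarith),
        betaF_zero (by
          rintro ⟨y', hy0', _, hn'⟩
          have : 0 ≤ y' * r * p := by positivity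
          nlinarith)]
    · have hy1 : 1 ≤ y := by omega
      rw [betaF_one ⟨y - 1, by linarith, by linarith, by linear_combination hn⟩,
        if_neg (by nlinarith),
        if_neg (fun h => by
          have h2 : y * ((r:ℤ) * p) = q * ((r:ℤ) * p) := by linear_combination hn.symm.trans h
          have := mul_right_cancel₀ (ne_of_gt hrp) h2
          omega)]
      ring
  · rw [betaF_zero ha]
    by_cases hb : ∃ y : ℤ, 0 ≤ y ∧ y < q ∧ n - r * p = y * r * p + p * q * r
    · obtain ⟨y', hy0', hyq', hn'⟩ := hb
      by_cases hy' : y' = q - 1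
      · have hn2 : n = 2 * ((p:ℤ) * q * r) := by subst hy'; linear_combination hn'
        rw [betaF_one ⟨y', hy0', hyq', hn'⟩, if_pos hn2,
          if_neg (by rw [hn2]; nlinarith)]
      · exact absurd ⟨y' + 1, by linarith, by omega, by linear_combination hn'⟩ ha
    · rw [betaF_zero hb,
        if_neg (fun h => ha ⟨0, le_refl 0, hq', by linarith⟩),
        if_neg (fun h => hb ⟨q - 1, by linarith, by linarith, by linear_combination h⟩)]

lemma coeff_one_sub_pow_mul (f : ℤ → ℤ) (hf : ∀ n : ℤ, n < 0 → f n = 0) (k n : ℕ) :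
    (PowerSeries.coeff (R := ℤ) n) ((1 - PowerSeries.X ^ k) * PowerSeries.mk fun j : ℕ => f j)
      = f n - f ((n : ℤ) - k) := by
  rw [sub_mul, one_mul, map_sub, PowerSeries.coeff_mk, PowerSeries.coeff_X_pow_mul']
  split_ifs with h
  · rw [PowerSeries.coeff_mk, Nat.cast_sub h]
  · rw [hf ((n : ℤ) - k) (by omega)]

lemma coe_mk (Q : Polynomial ℤ) :
    (Q : PowerSeries ℤ) = PowerSeries.mk fun n : ℕ => coeffZ Q n := by
  ext n
  rw [Polynomial.coeff_coe, PowerSeries.coeff_mk, coeffZ, if_pos (Int.ofNat_nonneg n)]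
  simp

lemma one_sub_X_pow_ne {k : ℕ} (hk : k ≠ 0) :
    (1 - PowerSeries.X ^ k : PowerSeries ℤ) ≠ 0 := by
  intro h
  have := congrArg (PowerSeries.constantCoeff (R := ℤ)) h
  simp [zero_pow hk] at this

lemma coeffZ_neg {Q : Polynomial ℤ} {m : ℤ} (hm : m < 0) : coeffZ Q m = 0 :=
  if_neg (not_le.mpr hm)

noncomputable def gsum (p q r : ℕ) (m : ℤ) : ℤ :=
  ∑ i ∈ Finset.range p, (chi p q r (m - i) - chi p q r (m - i - q)
    - chi p q r (m - i - r) + chi p q r (m - i - q - r))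

lemma gsum_neg {p q r : ℕ} {m : ℤ} (hm : m < 0) : gsum p q r m = 0 := by
  refine Finset.sum_eq_zero fun i _ => ?_
  have hi : (0:ℤ) ≤ i := Int.ofNat_nonneg i
  have hq : (0:ℤ) ≤ q := Int.ofNat_nonneg q
  have hr : (0:ℤ) ≤ r := Int.ofNat_nonneg r
  rw [chi_neg (by linarith), chi_neg (by linarith), chi_neg (by linarith),
    chi_neg (by linarith)]
  ring

lemma key_formula (p q r : ℕ) (hp : 0 < p) (hq : 0 < q) (hr : 0 < r)
    (hpq : Nat.Coprime p q) (hqr : Nat.Coprime q r) (hrp : Nat.Coprime r p)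
    (Q : Polynomial ℤ)
    (hQc : (Q : PowerSeries ℤ) *
        ((1 - PowerSeries.X ^ (p * q)) * (1 - PowerSeries.X ^ (q * r))
          * (1 - PowerSeries.X ^ (r * p)) * (1 - PowerSeries.X))
      = (1 - PowerSeries.X ^ (p * q * r)) * (1 - PowerSeries.X ^ p)
          * (1 - PowerSeries.X ^ q) * (1 - PowerSeries.X ^ r)) :
    ∀ m : ℤ, coeffZ Q m - coeffZ Q (m - (p : ℤ) * q * r) = gsum p q r m := by
  set Y : PowerSeries ℤ := PowerSeries.X with hY
  set Fchi : PowerSeries ℤ := PowerSeries.mk fun n : ℕ => chi p q r n with hF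
  have S1 : (1 - Y ^ (p * q)) * Fchi = PowerSeries.mk fun n : ℕ => psiF p q r n := by
    ext n
    rw [hF, coeff_one_sub_pow_mul (chi p q r) (fun _ h => chi_neg h), PowerSeries.coeff_mk]
    have := chi_sub_pq hp hq hr hpq hqr hrp (n : ℤ)
    rw [← this, Nat.cast_mul]
  have S2 : (1 - Y ^ (q * r)) * (PowerSeries.mk fun n : ℕ => psiF p q r n)
      = PowerSeries.mk fun n : ℕ => alphaF p q r n - betaF p q r n := by
    ext n
    rw [coeff_one_sub_pow_mul (psiF p q r) (fun _ h => psiF_neg h), PowerSeries.coeff_mk]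
    have := psi_sub_qr hp hq hr hpq hqr hrp (n : ℤ)
    rw [← this, Nat.cast_mul]
  have S3 : (1 - Y ^ (r * p)) * (PowerSeries.mk fun n : ℕ => alphaF p q r n - betaF p q r n)
      = (1 - Y ^ (p * q * r)) ^ 2 := by
    have hexp : (1 - Y ^ (p * q * r)) ^ 2
        = 1 - (Y ^ (p * q * r) + Y ^ (p * q * r)) + Y ^ (p * q * r + p * q * r) := by
      rw [pow_add]; ring
    ext n
    rw [coeff_one_sub_pow_mul (fun j => alphaF p q r j - betaF p q r j)
        (fun j h => by show alphaF p q r j - betaF p q r j = 0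
                       rw [alphaF_neg h, betaF_neg h, sub_zero]), hexp]
    simp only [hY, map_add, map_sub, PowerSeries.coeff_one, PowerSeries.coeff_X_pow]
    have hA : ((p:ℤ) * q * r) = ((p * q * r : ℕ) : ℤ) := by push_cast; ring
    have h1 := alpha_sub_rp hp hq hr (n : ℤ)
    have h2 := beta_sub_rp hp hq hr (n : ℤ)
    rw [hA] at h1 h2
    have hrp' : ((r * p : ℕ) : ℤ) = (r : ℤ) * p := by push_cast; ring
    rw [hrp']
    have e0 : (if (n : ℕ) = 0 then (1:ℤ) else 0) = (if ((n : ℤ)) = 0 then 1 else 0) := by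
      split_ifs <;> omega
    have e1 : (if (n : ℕ) = p * q * r then (1:ℤ) else 0)
        = (if ((n : ℤ)) = ((p * q * r : ℕ) : ℤ) then 1 else 0) := by
      split_ifs <;> omega
    have e2 : (if (n : ℕ) = p * q * r + p * q * r then (1:ℤ) else 0)
        = (if ((n : ℤ)) = 2 * ((p * q * r : ℕ) : ℤ) then 1 else 0) := by
      split_ifs <;> omega
    rw [e0, e1, e2]
    linear_combination h1 - h2
  have hUne : ((1 - Y ^ (p * q)) * (1 - Y ^ (q * r)) * (1 - Y ^ (r * p)) : PowerSeries ℤ)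
      ≠ 0 :=
    mul_ne_zero (mul_ne_zero (one_sub_X_pow_ne (by positivity))
      (one_sub_X_pow_ne (by positivity))) (one_sub_X_pow_ne (by positivity))
  have hUF : Fchi * ((1 - Y ^ (p * q)) * (1 - Y ^ (q * r)) * (1 - Y ^ (r * p)))
      = (1 - Y ^ (p * q * r)) ^ 2 := by
    calc Fchi * ((1 - Y ^ (p * q)) * (1 - Y ^ (q * r)) * (1 - Y ^ (r * p)))
        = (1 - Y ^ (r * p)) * ((1 - Y ^ (q * r)) * ((1 - Y ^ (p * q)) * Fchi)) := by ring
      _ = (1 - Y ^ (r * p)) * ((1 - Y ^ (q * r))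
            * (PowerSeries.mk fun n : ℕ => psiF p q r n)) := by rw [S1]
      _ = (1 - Y ^ (r * p))
            * (PowerSeries.mk fun n : ℕ => alphaF p q r n - betaF p q r n) := by rw [S2]
      _ = (1 - Y ^ (p * q * r)) ^ 2 := S3
  have hc1 : (Q : PowerSeries ℤ) * ((1 - Y) * (1 - Y ^ (p * q * r)))
      = Fchi * ((1 - Y ^ p) * (1 - Y ^ q) * (1 - Y ^ r)) := by
    apply mul_right_cancel₀ hUne
    calc (Q : PowerSeries ℤ) * ((1 - Y) * (1 - Y ^ (p * q * r)))
          * ((1 - Y ^ (p * q)) * (1 - Y ^ (q * r)) * (1 - Y ^ (r * p)))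
        = (Q : PowerSeries ℤ) * ((1 - Y ^ (p * q)) * (1 - Y ^ (q * r)) * (1 - Y ^ (r * p))
            * (1 - Y)) * (1 - Y ^ (p * q * r)) := by ring
      _ = (1 - Y ^ (p * q * r)) * (1 - Y ^ p) * (1 - Y ^ q) * (1 - Y ^ r)
            * (1 - Y ^ (p * q * r)) := by rw [hQc]
      _ = (1 - Y ^ (p * q * r)) ^ 2 * ((1 - Y ^ p) * (1 - Y ^ q) * (1 - Y ^ r)) := by ring
      _ = Fchi * ((1 - Y ^ (p * q)) * (1 - Y ^ (q * r)) * (1 - Y ^ (r * p)))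
            * ((1 - Y ^ p) * (1 - Y ^ q) * (1 - Y ^ r)) := by rw [hUF]
      _ = Fchi * ((1 - Y ^ p) * (1 - Y ^ q) * (1 - Y ^ r))
            * ((1 - Y ^ (p * q)) * (1 - Y ^ (q * r)) * (1 - Y ^ (r * p))) := by ring
  set sp : PowerSeries ℤ := ∑ i ∈ Finset.range p, Y ^ i with hsp
  have S4 : (1 - Y) * sp = 1 - Y ^ p := by
    have h := geom_sum_mul Y p
    rw [hsp]
    linear_combination -h
  have S5 : sp * Fchi = PowerSeries.mk fun n : ℕ =>
      ∑ i ∈ Finset.range p, chi p q r ((n : ℤ) - i) := by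
    ext n
    rw [hsp, Finset.sum_mul, map_sum, PowerSeries.coeff_mk]
    refine Finset.sum_congr rfl fun i _ => ?_
    rw [PowerSeries.coeff_X_pow_mul']
    split_ifs with h
    · rw [hF, PowerSeries.coeff_mk, Nat.cast_sub h]
    · rw [chi_neg (by omega)]
  have S6 : (1 - Y ^ q) * (PowerSeries.mk fun n : ℕ =>
        ∑ i ∈ Finset.range p, chi p q r ((n : ℤ) - i))
      = PowerSeries.mk fun n : ℕ =>
        ∑ i ∈ Finset.range p, (chi p q r ((n : ℤ) - i) - chi p q r ((n : ℤ) - i - q)) := by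
    ext n
    rw [coeff_one_sub_pow_mul (fun m : ℤ => ∑ i ∈ Finset.range p, chi p q r (m - i))
        (fun m hm => Finset.sum_eq_zero fun i _ => chi_neg (by
          have : (0:ℤ) ≤ i := Int.ofNat_nonneg i
          linarith)), PowerSeries.coeff_mk, ← Finset.sum_sub_distrib]
    refine Finset.sum_congr rfl fun i _ => ?_
    have : (n : ℤ) - (q : ℕ) - i = (n : ℤ) - i - q := by push_cast; ring
    rw [this]
  have S7 : (1 - Y ^ r) * (PowerSeries.mk fun n : ℕ =>
        ∑ i ∈ Finset.range p, (chi p q r ((n : ℤ) - i) - chi p q r ((n : ℤ) - i - q)))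
      = PowerSeries.mk fun n : ℕ => gsum p q r n := by
    ext n
    rw [coeff_one_sub_pow_mul
        (fun m : ℤ => ∑ i ∈ Finset.range p, (chi p q r (m - i) - chi p q r (m - i - q)))
        (fun m hm => Finset.sum_eq_zero fun i _ => by
          have hi : (0:ℤ) ≤ i := Int.ofNat_nonneg i
          have hq' : (0:ℤ) ≤ q := Int.ofNat_nonneg q
          rw [chi_neg (by linarith), chi_neg (by linarith), sub_zero]),
      PowerSeries.coeff_mk, gsum, ← Finset.sum_sub_distrib]
    refine Finset.sum_congr rfl fun i _ => ?_
    have h1 : (n : ℤ) - (r : ℕ) - i = (n : ℤ) - i - r := by push_cast; ring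
    rw [h1]
    have h2 : (n : ℤ) - i - r - q = (n : ℤ) - i - q - r := by ring
    rw [h2]
    ring
  have hc2 : (Q : PowerSeries ℤ) * (1 - Y ^ (p * q * r))
      = PowerSeries.mk fun n : ℕ => gsum p q r n := by
    have h1Y : (1 - Y : PowerSeries ℤ) ≠ 0 := by
      have := one_sub_X_pow_ne (k := 1) one_ne_zero
      rwa [pow_one] at this
    apply mul_right_cancel₀ h1Y
    calc (Q : PowerSeries ℤ) * (1 - Y ^ (p * q * r)) * (1 - Y)
        = (Q : PowerSeries ℤ) * ((1 - Y) * (1 - Y ^ (p * q * r))) := by ring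
      _ = Fchi * ((1 - Y ^ p) * (1 - Y ^ q) * (1 - Y ^ r)) := hc1
      _ = Fchi * (((1 - Y) * sp) * (1 - Y ^ q) * (1 - Y ^ r)) := by rw [S4]
      _ = (1 - Y ^ r) * ((1 - Y ^ q) * (sp * Fchi)) * (1 - Y) := by ring
      _ = (1 - Y ^ r) * ((1 - Y ^ q) * (PowerSeries.mk fun n : ℕ =>
            ∑ i ∈ Finset.range p, chi p q r ((n : ℤ) - i))) * (1 - Y) := by rw [S5]
      _ = (1 - Y ^ r) * (PowerSeries.mk fun n : ℕ =>
            ∑ i ∈ Finset.range p, (chi p q r ((n : ℤ) - i) - chi p q r ((n : ℤ) - i - q)))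
            * (1 - Y) := by rw [S6]
      _ = (PowerSeries.mk fun n : ℕ => gsum p q r n) * (1 - Y) := by rw [S7]
  intro m
  rcases le_or_gt 0 m with hm | hm
  · have := congrArg (PowerSeries.coeff (R := ℤ) m.toNat) hc2
    rw [mul_comm, coe_mk, coeff_one_sub_pow_mul (coeffZ Q) (fun _ h => coeffZ_neg h),
      PowerSeries.coeff_mk] at this
    rw [Int.toNat_of_nonneg hm] at this
    have hA : ((p * q * r : ℕ) : ℤ) = (p:ℤ) * q * r := by push_cast; ring
    rw [hA] at this
    exact this
  · rw [coeffZ_neg hm, coeffZ_neg (by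
      have : (0:ℤ) < (p:ℤ) * q * r := by positivity
      linarith), gsum_neg hm]
    ring

theorem stmt_12 (p q r : ℕ) (hp : 3 ≤ p) (hq : 3 ≤ q) (hr : 3 ≤ r)
    (hpq : Nat.Coprime p q) (hqr : Nat.Coprime q r) (hrp : Nat.Coprime r p)
    (Q : Polynomial ℤ) (hQ : Q * incexcD p q r = incexcN p q r)
    (m : ℤ) (hm : m < (p : ℤ) * q * r)
    (hno : ¬ ∃ n : ℤ,
      ((m - q - p < n ∧ n ≤ m - q) ∨ (m - p < n ∧ n ≤ m)) ∧
      (r : ℤ) ∣ n ∧ (chi p q r n = 1 ∨ chi p q r (n - r) = 1)) :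
    coeffZ Q m = coeffZ Q (m - p * q) := by
  have hp1 : 0 < p := by omega
  have hq1 : 0 < q := by omega
  have hr1 : 0 < r := by omega
  have hp' : (0:ℤ) < p := by exact_mod_cast hp1
  have hq' : (0:ℤ) < q := by exact_mod_cast hq1
  have hr' : (0:ℤ) < r := by exact_mod_cast hr1
  have hQc : (Q : PowerSeries ℤ) *
        ((1 - PowerSeries.X ^ (p * q)) * (1 - PowerSeries.X ^ (q * r))
          * (1 - PowerSeries.X ^ (r * p)) * (1 - PowerSeries.X))
      = (1 - PowerSeries.X ^ (p * q * r)) * (1 - PowerSeries.X ^ p)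
          * (1 - PowerSeries.X ^ q) * (1 - PowerSeries.X ^ r) := by
    have hcast := congrArg (fun P : Polynomial ℤ => (P : PowerSeries ℤ)) hQ
    simp only [incexcD, incexcN, Polynomial.coe_mul, Polynomial.coe_sub,
      Polynomial.coe_pow, Polynomial.coe_one, Polynomial.coe_X] at hcast
    linear_combination hcast
  have hkey := key_formula p q r hp1 hq1 hr1 hpq hqr hrp Q hQc
  have hpqr : (0:ℤ) < (p:ℤ) * q * r := by positivity
  have h1 : coeffZ Q m = gsum p q r m := by
    have h := hkey m
    rw [coeffZ_neg (show m - (p:ℤ) * q * r < 0 by linarith)] at h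
    linarith
  have h2 : coeffZ Q (m - (p:ℤ) * q) = gsum p q r (m - (p:ℤ) * q) := by
    have h := hkey (m - (p:ℤ) * q)
    have hpq0 : (0:ℤ) < (p:ℤ) * q := by positivity
    rw [coeffZ_neg (show m - (p:ℤ) * q - (p:ℤ) * q * r < 0 by linarith)] at h
    linarith
  rw [h1, h2, ← sub_eq_zero]
  simp only [gsum]
  rw [← Finset.sum_sub_distrib]
  refine Finset.sum_eq_zero fun i hi => ?_
  have hi' : (i:ℤ) < p := by exact_mod_cast Finset.mem_range.mp hi
  have hi0 : (0:ℤ) ≤ i := Int.ofNat_nonneg i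
  -- no event at n and n - r
  have no1 : ∀ n : ℤ, ¬ ((r : ℤ) ∣ n ∧ (chi p q r n = 1 ∨ chi p q r (n - r) = 1)) →
      psiF p q r n = 0 ∧ psiF p q r (n - r) = 0 := by
    intro n hno'
    constructor
    · refine psiF_zero ?_
      rintro ⟨x, y, hx0, hxp, hy0, hyq, hn⟩
      exact hno' ⟨⟨x * q + y * p, by linear_combination hn⟩,
        Or.inl (chi_one ⟨x, y, 0, 0, hx0, hxp, hy0, hyq, le_refl 0, hr', le_refl 0,
          by linear_combination hn⟩)⟩
    · refine psiF_zero ?_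
      rintro ⟨x, y, hx0, hxp, hy0, hyq, hn⟩
      exact hno' ⟨⟨x * q + y * p + 1, by linear_combination hn⟩,
        Or.inr (chi_one ⟨x, y, 0, 0, hx0, hxp, hy0, hyq, le_refl 0, hr', le_refl 0,
          by linear_combination hn⟩)⟩
  obtain ⟨hψ1, hψ3⟩ := no1 (m - (i:ℤ))
    (fun hb => hno ⟨m - (i:ℤ), Or.inr ⟨by linarith, by linarith⟩, hb⟩)
  obtain ⟨hψ2, hψ4⟩ := no1 (m - (i:ℤ) - q)
    (fun hb => hno ⟨m - (i:ℤ) - q, Or.inl ⟨by linarith, by linarith⟩, hb⟩)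
  have A := (chi_sub_pq hp1 hq1 hr1 hpq hqr hrp (m - (i:ℤ))).trans hψ1
  have B := (chi_sub_pq hp1 hq1 hr1 hpq hqr hrp (m - (i:ℤ) - q)).trans hψ2
  have C := (chi_sub_pq hp1 hq1 hr1 hpq hqr hrp (m - (i:ℤ) - r)).trans hψ3
  have D := (chi_sub_pq hp1 hq1 hr1 hpq hqr hrp (m - (i:ℤ) - q - r)).trans hψ4
  have e1 : m - (p:ℤ) * q - i = m - (i:ℤ) - p * q := by ring
  have e2 : m - (i:ℤ) - p * q - q = m - (i:ℤ) - q - p * q := by ring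
  have e3 : m - (i:ℤ) - p * q - r = m - (i:ℤ) - r - p * q := by ring
  have e4 : m - (i:ℤ) - q - p * q - r = m - (i:ℤ) - q - r - p * q := by ring
  rw [e1, e2, e3, e4]
  linear_combination A - B - C + D
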